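/- Let k ≥ 1 be fixed. For each tuple (n_1,...,n_k), let random variables (ξ_j^i)_{1≤j≤n_i, 1≤i≤k} have joint distribution P_{n_1,...,n_k} invariant under the product group S_{n_1} × ... × S_{n_k} (the i-th factor permuting ξ_1^i,...,ξ_{n_i}^i). Suppose for each i the LLN holds: for every bounded measurable f, (1/n_i)∑_{j=1}^{n_i} f(ξ_j^i) → μ^i(f) in probability as n_i → ∞, with μ^i nonrandom. Then for any m_1,...,m_k and bounded measurable functions f_j^i (1 ≤ j ≤ m_i), E[∏_{i=1}^k ∏_{j=1}^{m_i} f_j^i(ξ_j^i)] → ∏_{i=1}^k ∏_{j=1}^{m_i} μ^i(f_j^i) as all n_i → ∞. -/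

import Mathlib

open MeasureTheory Filter
open scoped ENNReal

open scoped ENNReal


lemma abs_prod_le_pow {ι : Type*} (s : Finset ι) (a : ι → ℝ) (C : ℝ) (hC : 0 ≤ C)
    (h : ∀ t ∈ s, |a t| ≤ C) : |∏ t ∈ s, a t| ≤ C ^ s.card := by
  rw [Finset.abs_prod]
  calc ∏ t ∈ s, |a t| ≤ ∏ t ∈ s, C :=
        Finset.prod_le_prod (fun t _ => abs_nonneg _) h
    _ = C ^ s.card := Finset.prod_const C

lemma abs_prod_sub_prod {ι : Type*} [DecidableEq ι] (s : Finset ι) (a b : ι → ℝ) (C : ℝ) (hC : 1 ≤ C)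
    (ha : ∀ t ∈ s, |a t| ≤ C) (hb : ∀ t ∈ s, |b t| ≤ C) :
    |∏ t ∈ s, a t - ∏ t ∈ s, b t| ≤ (∑ t ∈ s, |a t - b t|) * C ^ s.card := by
  have hC0 : (0:ℝ) ≤ C := le_trans zero_le_one hC
  induction s using Finset.induction with
  | empty => simp
  | @insert t s ht ih =>
    have ha' : ∀ u ∈ s, |a u| ≤ C := fun u hu => ha u (Finset.mem_insert_of_mem hu)
    have hb' : ∀ u ∈ s, |b u| ≤ C := fun u hu => hb u (Finset.mem_insert_of_mem hu)
    rw [Finset.prod_insert ht, Finset.prod_insert ht, Finset.sum_insert ht,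
      Finset.card_insert_of_notMem ht]
    have key : a t * ∏ x ∈ s, a x - b t * ∏ x ∈ s, b x
        = (a t - b t) * ∏ x ∈ s, a x + b t * (∏ x ∈ s, a x - ∏ x ∈ s, b x) := by ring
    rw [key]
    have h1 : |(a t - b t) * ∏ x ∈ s, a x| ≤ |a t - b t| * C ^ s.card := by
      rw [abs_mul]
      exact mul_le_mul_of_nonneg_left (abs_prod_le_pow s a C hC0 ha') (abs_nonneg _)
    have h2 : |b t * (∏ x ∈ s, a x - ∏ x ∈ s, b x)| ≤ C * ((∑ x ∈ s, |a x - b x|) * C ^ s.card) := by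
      rw [abs_mul]
      exact mul_le_mul (hb t (Finset.mem_insert_self t s)) (ih ha' hb') (abs_nonneg _) hC0
    calc |(a t - b t) * ∏ x ∈ s, a x + b t * (∏ x ∈ s, a x - ∏ x ∈ s, b x)|
        ≤ |(a t - b t) * ∏ x ∈ s, a x| + |b t * (∏ x ∈ s, a x - ∏ x ∈ s, b x)| := abs_add_le _ _
      _ ≤ |a t - b t| * C ^ s.card + C * ((∑ x ∈ s, |a x - b x|) * C ^ s.card) := add_le_add h1 h2
      _ ≤ (|a t - b t| + ∑ x ∈ s, |a x - b x|) * C ^ (s.card + 1) := by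
          rw [pow_succ]
          have h3 : |a t - b t| * C ^ s.card ≤ |a t - b t| * (C ^ s.card * C) := by
            apply mul_le_mul_of_nonneg_left _ (abs_nonneg _)
            nlinarith [pow_nonneg hC0 s.card, pow_pos (lt_of_lt_of_le zero_lt_one hC) s.card]
          nlinarith [Finset.sum_nonneg (fun x (_ : x ∈ s) => abs_nonneg (a x - b x)),
            pow_nonneg hC0 s.card]

lemma integrable_of_abs_le {α : Type*} [MeasurableSpace α] {P : Measure α} [IsProbabilityMeasure P]
    {g : α → ℝ} (hg : Measurable g) (D : ℝ) (hD : ∀ x, |g x| ≤ D) : Integrable g P :=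
  ⟨hg.aestronglyMeasurable, HasFiniteIntegral.of_bounded (C := D) (ae_of_all _ hD)⟩

lemma abs_integral_le_of_abs_le {α : Type*} [MeasurableSpace α] {P : Measure α}
    [IsProbabilityMeasure P] {g : α → ℝ} (D : ℝ) (hD : ∀ x, |g x| ≤ D) :
    |∫ x, g x ∂P| ≤ D := by
  have h := norm_integral_le_of_norm_le_const (μ := P) (f := g) (C := D) (ae_of_all _ hD)
  simpa using h

lemma measurable_updateComp {k : ℕ} (i : Fin k) (σ : ℕ → ℕ) :
    Measurable (fun x : Fin k → ℕ → ℝ => Function.update x i (x i ∘ σ)) := by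
  apply measurable_pi_lambda
  intro i'
  by_cases h : i' = i
  · rw [h]
    simp only [Function.update_self]
    exact measurable_pi_lambda _ (fun j => (measurable_pi_apply (σ j)).comp (measurable_pi_apply i))
  · simp only [Function.update_of_ne h]
    exact measurable_pi_apply i'

lemma integral_update_comp {k : ℕ} {P : Measure (Fin k → ℕ → ℝ)} {i : Fin k} {σ : Equiv.Perm ℕ}
    (hmap : Measure.map (fun x : Fin k → ℕ → ℝ => Function.update x i (x i ∘ σ)) P = P)
    {g : (Fin k → ℕ → ℝ) → ℝ} (hg : Measurable g) :
    ∫ x, g (Function.update x i (x i ∘ σ)) ∂ P = ∫ x, g x ∂ P := by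
  conv_rhs => rw [← hmap]
  rw [integral_map (measurable_updateComp i σ).aemeasurable hg.aestronglyMeasurable]



set_option maxHeartbeats 1000000

/-- Propagation of chaos for `k` blocks of exchangeable random variables.  `P n` is the
joint law of `(ξ_j^i)_{j < n i, i < k}`, realized on `Fin k → ℕ → ℝ` (coordinates `x i j`
with `j ≥ n i` irrelevant), invariant under permutations within each block.  If each block
satisfies the law of large numbers with limit functional `μ i`, then expectations of
products factorize in the limit as all `n i → ∞`. -/
theorem propagation_of_chaos (k : ℕ) (hk : 1 ≤ k)
    (P : (Fin k → ℕ) → Measure (Fin k → ℕ → ℝ))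
    (hP : ∀ n, IsProbabilityMeasure (P n))
    (hexch : ∀ n : Fin k → ℕ, ∀ i : Fin k, ∀ σ : Equiv.Perm ℕ,
      (∀ j, n i ≤ j → σ j = j) →
      Measure.map (fun x => Function.update x i (x i ∘ σ)) (P n) = P n)
    (μ : Fin k → (ℝ → ℝ) → ℝ)
    (hLLN : ∀ i : Fin k, ∀ f : ℝ → ℝ, Measurable f → (∃ C, ∀ x, |f x| ≤ C) →
      ∀ ε : ℝ, 0 < ε →
      Tendsto (fun n : Fin k → ℕ =>
          P n {x | ε ≤ |(n i : ℝ)⁻¹ * ∑ j ∈ Finset.range (n i), f (x i j) - μ i f|})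
        atTop (nhds 0))
    (m : Fin k → ℕ) (f : Fin k → ℕ → ℝ → ℝ)
    (hf : ∀ i, ∀ j < m i, Measurable (f i j))
    (hfb : ∀ i, ∀ j < m i, ∃ C, ∀ x, |f i j x| ≤ C) :
    Tendsto (fun n : Fin k → ℕ =>
        ∫ x, ∏ i : Fin k, ∏ j ∈ Finset.range (m i), f i j (x i j) ∂ P n)
      atTop (nhds (∏ i : Fin k, ∏ j ∈ Finset.range (m i), μ i (f i j))) := by
  classical
  haveI := hP
  -- the index set
  set Sg : Finset ((_ : Fin k) × ℕ) :=
    (Finset.univ : Finset (Fin k)).sigma (fun i => Finset.range (m i)) with hSgdef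
  have memSg : ∀ p : (_ : Fin k) × ℕ, p ∈ Sg ↔ p.2 < m p.1 := by
    intro p; simp [hSgdef, Finset.mem_sigma]
  set T : ℕ := ∑ i, m i with hTdef
  have cardSg : Sg.card = T := by
    simp [hSgdef, Finset.card_sigma, hTdef]
  -- a uniform bound C ≥ 1
  obtain ⟨C, hC1, hfC⟩ : ∃ C : ℝ, 1 ≤ C ∧ ∀ i, ∀ j < m i, ∀ x, |f i j x| ≤ C := by
    set Cf : Fin k → ℕ → ℝ := fun i j => if h : j < m i then (hfb i j h).choose else 0 with hCfdef
    have hCf : ∀ i, ∀ (j : ℕ), j < m i → ∀ x, |f i j x| ≤ Cf i j := by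
      intro i j hj x
      simp only [hCfdef, dif_pos hj]
      exact (hfb i j hj).choose_spec x
    refine ⟨1 + ∑ i, ∑ j ∈ Finset.range (m i), max 0 (Cf i j), ?_, ?_⟩
    · have h0 : 0 ≤ ∑ i, ∑ j ∈ Finset.range (m i), max 0 (Cf i j) :=
        Finset.sum_nonneg fun i _ => Finset.sum_nonneg fun j _ => le_max_left 0 _
      linarith
    · intro i j hj x
      have h1 : |f i j x| ≤ Cf i j := hCf i j hj x
      have h2 : Cf i j ≤ max 0 (Cf i j) := le_max_right _ _
      have h3 : max 0 (Cf i j) ≤ ∑ j' ∈ Finset.range (m i), max 0 (Cf i j') :=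
        Finset.single_le_sum (f := fun j' => max (0:ℝ) (Cf i j'))
          (fun j' _ => le_max_left 0 _) (Finset.mem_range.mpr hj)
      have h4 : (∑ j' ∈ Finset.range (m i), max 0 (Cf i j'))
          ≤ ∑ i', ∑ j' ∈ Finset.range (m i'), max 0 (Cf i' j') :=
        Finset.single_le_sum (f := fun i' => ∑ j' ∈ Finset.range (m i'), max (0:ℝ) (Cf i' j'))
          (fun i' _ => Finset.sum_nonneg fun j' _ => le_max_left 0 _) (Finset.mem_univ i)
      linarith
  have hC0 : (0 : ℝ) ≤ C := le_trans zero_le_one hC1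
  have hCpos : (0 : ℝ) < C := lt_of_lt_of_le zero_lt_one hC1
  set K : ℝ := C ^ (T + 1) with hKdef
  have hK1 : 1 ≤ K := by simpa using pow_le_pow_left₀ zero_le_one hC1 (T + 1)
  have hKpos : 0 < K := lt_of_lt_of_le zero_lt_one hK1
  -- block averages
  set S : (Fin k → ℕ) → Fin k → ℕ → (Fin k → ℕ → ℝ) → ℝ :=
    fun n i j x => (n i : ℝ)⁻¹ * ∑ l ∈ Finset.range (n i), f i j (x i l) with hSdef
  have measEval : ∀ (i : Fin k) (l : ℕ), Measurable fun x : Fin k → ℕ → ℝ => x i l :=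
    fun i l => (measurable_pi_apply l).comp (measurable_pi_apply i)
  have measS : ∀ n (i : Fin k) j, j < m i → Measurable (S n i j) := by
    intro n i j hj
    exact (Finset.measurable_sum _ (fun l _ => (hf i j hj).comp (measEval i l))).const_mul _
  have hSC : ∀ n (i : Fin k) j, j < m i → ∀ x, |S n i j x| ≤ C := by
    intro n i j hj x
    simp only [hSdef]
    rw [abs_mul, abs_inv, Nat.abs_cast]
    rcases Nat.eq_zero_or_pos (n i) with h0 | h0
    · simp [h0, hC0]
    · have h1 : |∑ l ∈ Finset.range (n i), f i j (x i l)| ≤ (n i : ℝ) * C := by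
        calc |∑ l ∈ Finset.range (n i), f i j (x i l)|
            ≤ ∑ l ∈ Finset.range (n i), |f i j (x i l)| := Finset.abs_sum_le_sum_abs _ _
          _ ≤ ∑ _l ∈ Finset.range (n i), C := Finset.sum_le_sum fun l _ => hfC i j hj _
          _ = (n i : ℝ) * C := by simp [mul_comm]
      have h2 : (0:ℝ) < (n i : ℝ) := by exact_mod_cast h0
      calc ((n i : ℝ))⁻¹ * |∑ l ∈ Finset.range (n i), f i j (x i l)|
          ≤ ((n i : ℝ))⁻¹ * ((n i : ℝ) * C) := by
            apply mul_le_mul_of_nonneg_left h1 (by positivity)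
        _ = C := by field_simp
  have hμC : ∀ (i : Fin k), ∀ j < m i, |μ i (f i j)| ≤ C := by
    intro i j hj
    by_contra hcon
    push_neg at hcon
    have hε0 : 0 < |μ i (f i j)| - C := by linarith
    have h := hLLN i (f i j) (hf i j hj) (hfb i j hj) (|μ i (f i j)| - C) hε0
    have hall : ∀ n : Fin k → ℕ,
        P n {x | |μ i (f i j)| - C ≤
          |(n i : ℝ)⁻¹ * ∑ l ∈ Finset.range (n i), f i j (x i l) - μ i (f i j)|} = 1 := by
      intro n
      have hset : {x : Fin k → ℕ → ℝ | |μ i (f i j)| - C ≤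
          |(n i : ℝ)⁻¹ * ∑ l ∈ Finset.range (n i), f i j (x i l) - μ i (f i j)|} = Set.univ := by
        ext x
        simp only [Set.mem_setOf_eq, Set.mem_univ, iff_true]
        have h1 : |(n i : ℝ)⁻¹ * ∑ l ∈ Finset.range (n i), f i j (x i l)| ≤ C := hSC n i j hj x
        have h2 := abs_sub_abs_le_abs_sub (μ i (f i j))
          ((n i : ℝ)⁻¹ * ∑ l ∈ Finset.range (n i), f i j (x i l))
        rw [abs_sub_comm] at h2
        linarith
      rw [hset]
      exact measure_univ
    have h' : Tendsto (fun _ : Fin k → ℕ => (1 : ℝ≥0∞)) atTop (nhds 0) :=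
      (tendsto_congr hall).mp h
    have : (1 : ℝ≥0∞) = 0 := tendsto_nhds_unique tendsto_const_nhds h'
    simp at this
  -- hybrid integrands
  set g : (Fin k → ℕ) → ℕ → ℕ → ((_ : Fin k) × ℕ) → (Fin k → ℕ → ℝ) → ℝ :=
    fun n a b p x =>
      if (p.1 : ℕ) < a ∨ ((p.1 : ℕ) = a ∧ p.2 < b) then S n p.1 p.2 x else f p.1 p.2 (x p.1 p.2)
    with hgdef
  have measg : ∀ n a b p, p ∈ Sg → Measurable (g n a b p) := by
    intro n a b p hp
    have hpj : p.2 < m p.1 := (memSg p).mp hp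
    by_cases h : (p.1 : ℕ) < a ∨ ((p.1 : ℕ) = a ∧ p.2 < b)
    · simpa [hgdef, h] using measS n p.1 p.2 hpj
    · simpa [hgdef, h, Function.comp_def] using (hf p.1 p.2 hpj).comp (measEval p.1 p.2)
  have hgC : ∀ n a b p, p ∈ Sg → ∀ x, |g n a b p x| ≤ C := by
    intro n a b p hp x
    have hpj : p.2 < m p.1 := (memSg p).mp hp
    by_cases h : (p.1 : ℕ) < a ∨ ((p.1 : ℕ) = a ∧ p.2 < b)
    · simpa [hgdef, h] using hSC n p.1 p.2 hpj x
    · simpa [hgdef, h] using hfC p.1 p.2 hpj (x p.1 p.2)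
  set G : (Fin k → ℕ) → ℕ → ℕ → ℝ := fun n a b => ∫ x, ∏ p ∈ Sg, g n a b p x ∂ P n with hGdef
  -- endpoints of the chain
  have hG00 : ∀ n, G n 0 0 = ∫ x, ∏ i, ∏ j ∈ Finset.range (m i), f i j (x i j) ∂ P n := by
    intro n
    refine integral_congr_ae (ae_of_all _ fun x => ?_)
    dsimp only
    rw [hSgdef, Finset.prod_sigma (f := fun p => g n 0 0 p x)]
    refine Finset.prod_congr rfl fun i _ => Finset.prod_congr rfl fun j hj => ?_
    simp [hgdef]
  have hGk0 : ∀ n, G n k 0 = ∫ x, ∏ p ∈ Sg, S n p.1 p.2 x ∂ P n := by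
    intro n
    refine integral_congr_ae (ae_of_all _ fun x => ?_)
    dsimp only
    refine Finset.prod_congr rfl fun p _ => ?_
    simp [hgdef, p.1.isLt]
  have hGnext : ∀ n (i₀ : Fin k), G n (i₀ : ℕ) (m i₀) = G n ((i₀ : ℕ) + 1) 0 := by
    intro n i₀
    refine integral_congr_ae (ae_of_all _ fun x => ?_)
    dsimp only
    refine Finset.prod_congr rfl fun p hp => ?_
    have hpj : p.2 < m p.1 := (memSg p).mp hp
    simp only [hgdef]
    refine if_congr ?_ rfl rfl
    constructor
    · rintro (h | ⟨h, h2⟩)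
      · left; omega
      · left; omega
    · rintro (h | ⟨h, h2⟩)
      · rcases Nat.lt_succ_iff_lt_or_eq.mp h with h' | h'
        · left; exact h'
        · right
          refine ⟨h', ?_⟩
          have heq : p.1 = i₀ := Fin.ext h'
          rw [← heq]
          exact hpj
      · omega
  -- the one-step exchangeability estimate
  have step : ∀ n : Fin k → ℕ, (∀ i, m i ≤ n i) → ∀ (i₀ : Fin k), ∀ b < m i₀,
      |G n (i₀ : ℕ) (b + 1) - G n (i₀ : ℕ) b| ≤ (n i₀ : ℝ)⁻¹ * (2 * (m i₀) * K) := by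
    intro n hmn i₀ b hb
    set p₀ : (_ : Fin k) × ℕ := ⟨i₀, b⟩ with hp₀def
    have hp₀ : p₀ ∈ Sg := (memSg p₀).mpr hb
    set B : (Fin k → ℕ → ℝ) → ℝ := fun x => ∏ p ∈ Sg.erase p₀, g n (i₀ : ℕ) b p x with hBdef
    have measB : Measurable B :=
      Finset.measurable_prod _ fun p hp => measg n _ b p (Finset.mem_of_mem_erase hp)
    have hBC : ∀ x, |B x| ≤ C ^ T := by
      intro x
      have h1 : |B x| ≤ C ^ (Sg.erase p₀).card :=
        abs_prod_le_pow _ _ C hC0 (fun p hp => hgC n _ b p (Finset.mem_of_mem_erase hp) x)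
      refine le_trans h1 (pow_le_pow_right₀ hC1 ?_)
      rw [← cardSg]
      exact Finset.card_le_card (Finset.erase_subset _ _)
    have gfix : ∀ p ∈ Sg.erase p₀, ∀ x, g n (i₀ : ℕ) (b + 1) p x = g n (i₀ : ℕ) b p x := by
      intro p hp x
      have hne : p ≠ p₀ := Finset.ne_of_mem_erase hp
      simp only [hgdef]
      refine if_congr ?_ rfl rfl
      constructor
      · rintro (h | ⟨h, h2⟩)
        · left; exact h
        · rcases Nat.lt_succ_iff_lt_or_eq.mp h2 with h' | h'
          · right; exact ⟨h, h'⟩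
          · exfalso
            apply hne
            rw [hp₀def]
            exact Sigma.ext (Fin.ext h) (heq_of_eq h')
      · rintro (h | ⟨h, h2⟩)
        · left; exact h
        · right; exact ⟨h, Nat.lt_succ_of_lt h2⟩
    have hsplit1 : ∀ x, ∏ p ∈ Sg, g n (i₀ : ℕ) (b + 1) p x = S n i₀ b x * B x := by
      intro x
      rw [← Finset.mul_prod_erase Sg _ hp₀]
      congr 1
      · simp [hgdef, hp₀def]
      · simp only [hBdef]
        exact Finset.prod_congr rfl fun p hp => gfix p hp x
    have hsplit0 : ∀ x, ∏ p ∈ Sg, g n (i₀ : ℕ) b p x = f i₀ b (x i₀ b) * B x := by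
      intro x
      rw [← Finset.mul_prod_erase Sg _ hp₀]
      congr 1
      simp only [hgdef, hp₀def]
      rw [if_neg]
      rintro (h | ⟨h, h2⟩)
      · exact lt_irrefl _ h
      · exact lt_irrefl _ h2
    set I : ℕ → ℝ := fun l => ∫ x, f i₀ b (x i₀ l) * B x ∂ P n with hIdef
    have hfBbound : ∀ (l : ℕ) x, |f i₀ b (x i₀ l) * B x| ≤ C ^ (T + 1) := by
      intro l x
      rw [abs_mul, pow_succ']
      exact mul_le_mul (hfC i₀ b hb _) (hBC x) (abs_nonneg _) hC0
    have integ : ∀ l, Integrable (fun x => f i₀ b (x i₀ l) * B x) (P n) := fun l =>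
      integrable_of_abs_le (((hf i₀ b hb).comp (measEval i₀ l)).mul measB) _ (hfBbound l)
    have hIbound : ∀ l, |I l| ≤ C ^ (T + 1) := fun l =>
      abs_integral_le_of_abs_le _ (hfBbound l)
    have hGb1 : G n (i₀ : ℕ) (b + 1) = ∫ x, S n i₀ b x * B x ∂ P n :=
      integral_congr_ae (ae_of_all _ fun x => hsplit1 x)
    have hGb : G n (i₀ : ℕ) b = ∫ x, f i₀ b (x i₀ b) * B x ∂ P n :=
      integral_congr_ae (ae_of_all _ fun x => hsplit0 x)
    have hexp : ∫ x, S n i₀ b x * B x ∂ P n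
        = (n i₀ : ℝ)⁻¹ * ∑ l ∈ Finset.range (n i₀), I l := by
      have h1 : ∀ x, S n i₀ b x * B x
          = (n i₀ : ℝ)⁻¹ * ∑ l ∈ Finset.range (n i₀), f i₀ b (x i₀ l) * B x := by
        intro x
        simp only [hSdef]
        rw [mul_assoc, Finset.sum_mul]
      rw [integral_congr_ae (ae_of_all _ h1), integral_const_mul _ _,
        integral_finset_sum _ (fun l _ => integ l)]
    have key : ∀ l, m i₀ ≤ l → l < n i₀ → I l = I b := by
      intro l hl1 hl2
      have hbn : b < n i₀ := lt_of_lt_of_le hb (hmn i₀)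
      set σ : Equiv.Perm ℕ := Equiv.swap b l with hσdef
      have hσfix : ∀ j, n i₀ ≤ j → σ j = j := by
        intro j hj
        exact Equiv.swap_apply_of_ne_of_ne (by omega) (by omega)
      have hmeas : Measurable fun x : Fin k → ℕ → ℝ => f i₀ b (x i₀ b) * B x :=
        ((hf i₀ b hb).comp (measEval i₀ b)).mul measB
      have h0 := integral_update_comp (hexch n i₀ σ hσfix) hmeas
      have h2 : ∀ x : Fin k → ℕ → ℝ,
          f i₀ b ((Function.update x i₀ (x i₀ ∘ σ)) i₀ b) * B (Function.update x i₀ (x i₀ ∘ σ))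
            = f i₀ b (x i₀ l) * B x := by
        intro x
        have e1 : (Function.update x i₀ (x i₀ ∘ σ)) i₀ = x i₀ ∘ σ :=
          Function.update_self _ _ _
        congr 1
        · rw [e1]
          simp only [Function.comp_apply, hσdef, Equiv.swap_apply_left]
        · simp only [hBdef]
          refine Finset.prod_congr rfl fun p hp => ?_
          have hne : p ≠ p₀ := Finset.ne_of_mem_erase hp
          have hpj : p.2 < m p.1 := (memSg _).mp (Finset.mem_of_mem_erase hp)
          by_cases hpi : p.1 = i₀
          · have hp2b : p.2 ≠ b := by
              intro h
              apply hne
              rw [hp₀def]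
              exact Sigma.ext hpi (heq_of_eq h)
            have hp2l : p.2 ≠ l := by
              intro h
              rw [hpi] at hpj
              omega
            by_cases hc : p.2 < b
            · have hcond : (p.1 : ℕ) < (i₀ : ℕ) ∨ ((p.1 : ℕ) = (i₀ : ℕ) ∧ p.2 < b) :=
                Or.inr ⟨by rw [hpi], hc⟩
              simp only [hgdef, if_pos hcond, hSdef, hpi, e1]
              congr 1
              refine Finset.sum_equiv σ (fun l' => ?_) (fun l' _ => rfl)
              simp only [Finset.mem_range]
              rcases eq_or_ne l' b with rfl | h1
              · simp only [hσdef, Equiv.swap_apply_left]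
                omega
              · rcases eq_or_ne l' l with rfl | h2
                · simp only [hσdef, Equiv.swap_apply_right]
                  omega
                · rw [hσdef, Equiv.swap_apply_of_ne_of_ne h1 h2]
            · have hcond : ¬((p.1 : ℕ) < (i₀ : ℕ) ∨ ((p.1 : ℕ) = (i₀ : ℕ) ∧ p.2 < b)) := by
                rw [hpi]
                rintro (h | ⟨h, h2⟩)
                · exact lt_irrefl _ h
                · exact hc h2
              simp only [hgdef, if_neg hcond, hpi, e1, Function.comp_apply]
              rw [hσdef, Equiv.swap_apply_of_ne_of_ne hp2b hp2l]
          · have e2 : (Function.update x i₀ (x i₀ ∘ σ)) p.1 = x p.1 :=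
              Function.update_of_ne hpi _ _
            simp only [hgdef, hSdef, e2]
      calc I l = ∫ x, f i₀ b ((Function.update x i₀ (x i₀ ∘ σ)) i₀ b)
              * B (Function.update x i₀ (x i₀ ∘ σ)) ∂ P n :=
            (integral_congr_ae (ae_of_all _ fun x => h2 x)).symm
        _ = ∫ x, f i₀ b (x i₀ b) * B x ∂ P n := h0
        _ = I b := rfl
    have hnpos : (0 : ℝ) < (n i₀ : ℝ) := by
      have : 0 < n i₀ := lt_of_lt_of_le (Nat.pos_of_ne_zero (by omega)) (hmn i₀)
      exact_mod_cast this
    have hdiff : G n (i₀ : ℕ) (b + 1) - G n (i₀ : ℕ) b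
        = (n i₀ : ℝ)⁻¹ * ∑ l ∈ Finset.range (n i₀), (I l - I b) := by
      rw [hGb1, hGb, hexp]
      have hIb : ∫ x, f i₀ b (x i₀ b) * B x ∂ P n = I b := rfl
      rw [hIb, Finset.sum_sub_distrib, Finset.sum_const, Finset.card_range, mul_sub,
        nsmul_eq_mul, ← mul_assoc, inv_mul_cancel₀ (ne_of_gt hnpos), one_mul]
    have hsub : ∑ l ∈ Finset.range (n i₀), (I l - I b)
        = ∑ l ∈ Finset.range (m i₀), (I l - I b) :=
      (Finset.sum_subset (Finset.range_subset_range.mpr (hmn i₀)) (fun l hl1 hl2 => by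
        rw [sub_eq_zero]
        exact key l (by simpa using hl2) (Finset.mem_range.mp hl1))).symm
    have habs : |∑ l ∈ Finset.range (m i₀), (I l - I b)| ≤ (m i₀ : ℝ) * (2 * C ^ (T + 1)) := by
      calc |∑ l ∈ Finset.range (m i₀), (I l - I b)|
          ≤ ∑ l ∈ Finset.range (m i₀), |I l - I b| := Finset.abs_sum_le_sum_abs _ _
        _ ≤ ∑ _l ∈ Finset.range (m i₀), 2 * C ^ (T + 1) := Finset.sum_le_sum fun l _ => by
            have h1 := hIbound l
            have h2 := hIbound b
            calc |I l - I b| ≤ |I l| + |I b| := abs_sub _ _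
              _ ≤ 2 * C ^ (T + 1) := by linarith
        _ = (m i₀ : ℝ) * (2 * C ^ (T + 1)) := by simp [mul_comm]
    rw [hdiff, hsub, abs_mul, abs_inv, Nat.abs_cast, hKdef]
    refine mul_le_mul_of_nonneg_left (le_trans habs (le_of_eq (by ring))) ?_
    positivity
  -- chaining
  have chain : ∀ (N : ℕ), 1 ≤ N → ∀ n : Fin k → ℕ, (∀ i, m i ≤ n i) → (∀ i, N ≤ n i) →
      |G n k 0 - G n 0 0| ≤ (k * T * (2 * T * K)) / N := by
    intro N hN n hmn hNn
    have hNpos : (0 : ℝ) < (N : ℝ) := by exact_mod_cast hN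
    set δ : ℝ := (T : ℝ) * ((N : ℝ)⁻¹ * (2 * T * K)) with hδdef
    have hinv : ∀ i : Fin k, (n i : ℝ)⁻¹ ≤ (N : ℝ)⁻¹ := by
      intro i
      apply inv_anti₀ hNpos
      exact_mod_cast hNn i
    have hmT : ∀ i : Fin k, (m i : ℝ) ≤ (T : ℝ) := by
      intro i
      have : m i ≤ T := by
        rw [hTdef]
        exact Finset.single_le_sum (f := m) (fun _ _ => Nat.zero_le _) (Finset.mem_univ i)
      exact_mod_cast this
    have inner : ∀ (i₀ : Fin k), ∀ b, b ≤ m i₀ →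
        |G n (i₀ : ℕ) b - G n (i₀ : ℕ) 0| ≤ (b : ℝ) * ((N : ℝ)⁻¹ * (2 * T * K)) := by
      intro i₀ b
      induction b with
      | zero => intro _; simp
      | succ b ih =>
        intro hb
        have hb' : b < m i₀ := hb
        have h1 := step n hmn i₀ b hb'
        have h2 := ih (le_of_lt hb')
        have h3 : (n i₀ : ℝ)⁻¹ * (2 * (m i₀) * K) ≤ (N : ℝ)⁻¹ * (2 * T * K) := by
          apply mul_le_mul (hinv i₀) ?_ (by positivity) (by positivity)
          have h4 := hmT i₀
          nlinarith [hKpos]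
        calc |G n (i₀ : ℕ) (b + 1) - G n (i₀ : ℕ) 0|
            ≤ |G n (i₀ : ℕ) (b + 1) - G n (i₀ : ℕ) b| + |G n (i₀ : ℕ) b - G n (i₀ : ℕ) 0| :=
              abs_sub_le _ _ _
          _ ≤ (N : ℝ)⁻¹ * (2 * T * K) + (b : ℝ) * ((N : ℝ)⁻¹ * (2 * T * K)) :=
              add_le_add (le_trans h1 h3) h2
          _ = ((b : ℝ) + 1) * ((N : ℝ)⁻¹ * (2 * T * K)) := by ring
          _ = (((b + 1 : ℕ)) : ℝ) * ((N : ℝ)⁻¹ * (2 * T * K)) := by push_cast; ring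
    have outer : ∀ a, a ≤ k → |G n a 0 - G n 0 0| ≤ (a : ℝ) * δ := by
      intro a
      induction a with
      | zero => intro _; simp
      | succ a ih =>
        intro ha
        have ha' : a < k := ha
        have h2 := ih (le_of_lt ha')
        have e := hGnext n ⟨a, ha'⟩
        simp only [Fin.val_mk] at e
        have h1 : |G n (a + 1) 0 - G n a 0| ≤ δ := by
          rw [← e]
          refine le_trans (inner ⟨a, ha'⟩ (m ⟨a, ha'⟩) le_rfl) ?_
          rw [hδdef]
          exact mul_le_mul_of_nonneg_right (hmT ⟨a, ha'⟩) (by positivity)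
        calc |G n (a + 1) 0 - G n 0 0|
            ≤ |G n (a + 1) 0 - G n a 0| + |G n a 0 - G n 0 0| := abs_sub_le _ _ _
          _ ≤ δ + (a : ℝ) * δ := add_le_add h1 h2
          _ = (((a + 1 : ℕ)) : ℝ) * δ := by push_cast; ring
    refine le_trans (outer k le_rfl) (le_of_eq ?_)
    rw [hδdef, div_eq_mul_inv]
    ring
  -- the LLN estimate and final assembly
  have hLsig : (∏ i, ∏ j ∈ Finset.range (m i), μ i (f i j)) = ∏ p ∈ Sg, μ p.1 (f p.1 p.2) := by
    rw [hSgdef]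
    exact (Finset.prod_sigma Finset.univ (fun i => Finset.range (m i))
      (fun p => μ p.1 (f p.1 p.2))).symm
  rw [Metric.tendsto_nhds]
  intro ε hε
  have hT1 : (0 : ℝ) < (T : ℝ) + 1 := by positivity
  have h8K : (0 : ℝ) < 8 * ((T : ℝ) + 1) * K := by nlinarith [hKpos]
  set ε' : ℝ := ε / (8 * ((T : ℝ) + 1) * K) with hε'def
  have hε'0 : 0 < ε' := div_pos hε h8K
  -- the estimate for the averaged product
  have hest : ∀ n : Fin k → ℕ,
      (∀ p ∈ Sg, ((P n) {x | ε' ≤ |S n p.1 p.2 x - μ p.1 (f p.1 p.2)|}).toReal ≤ ε') →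
      |G n k 0 - ∏ i, ∏ j ∈ Finset.range (m i), μ i (f i j)|
        ≤ (T : ℝ) * ((ε' + 2 * C * ε') * C ^ T) := by
    intro n hn
    have hΦmeas : Measurable (fun x => ∏ p ∈ Sg, S n p.1 p.2 x) :=
      Finset.measurable_prod _ fun p hp => measS n p.1 p.2 ((memSg p).mp hp)
    have hΦb : ∀ x, |∏ p ∈ Sg, S n p.1 p.2 x| ≤ C ^ T := by
      intro x
      rw [← cardSg]
      exact abs_prod_le_pow _ _ C hC0 (fun p hp => hSC n p.1 p.2 ((memSg p).mp hp) x)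
    have hpt : ∀ x, |(∏ p ∈ Sg, S n p.1 p.2 x) - ∏ i, ∏ j ∈ Finset.range (m i), μ i (f i j)|
        ≤ (∑ p ∈ Sg, |S n p.1 p.2 x - μ p.1 (f p.1 p.2)|) * C ^ T := by
      intro x
      rw [hLsig, ← cardSg]
      exact abs_prod_sub_prod Sg _ _ C hC1 (fun p hp => hSC n p.1 p.2 ((memSg p).mp hp) x)
        (fun p hp => hμC p.1 p.2 ((memSg p).mp hp))
    have hint1 : ∀ p ∈ Sg, Integrable (fun x => |S n p.1 p.2 x - μ p.1 (f p.1 p.2)|) (P n) := by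
      intro p hp
      have hpj := (memSg p).mp hp
      refine integrable_of_abs_le ((measS n p.1 p.2 hpj).sub measurable_const).abs (2 * C) ?_
      intro x
      rw [abs_abs]
      have h5 := hSC n p.1 p.2 hpj x
      have h6 := hμC p.1 p.2 hpj
      calc |S n p.1 p.2 x - μ p.1 (f p.1 p.2)|
          ≤ |S n p.1 p.2 x| + |μ p.1 (f p.1 p.2)| := abs_sub _ _
        _ ≤ 2 * C := by linarith
    have h2 : |G n k 0 - ∏ i, ∏ j ∈ Finset.range (m i), μ i (f i j)|
        ≤ ∫ x, (∑ p ∈ Sg, |S n p.1 p.2 x - μ p.1 (f p.1 p.2)|) * C ^ T ∂ P n := by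
      rw [hGk0 n]
      have hintΦ : Integrable (fun x => ∏ p ∈ Sg, S n p.1 p.2 x) (P n) :=
        integrable_of_abs_le hΦmeas _ hΦb
      have e1 : (∫ x, ∏ p ∈ Sg, S n p.1 p.2 x ∂ P n)
            - ∏ i, ∏ j ∈ Finset.range (m i), μ i (f i j)
          = ∫ x, (∏ p ∈ Sg, S n p.1 p.2 x)
            - ∏ i, ∏ j ∈ Finset.range (m i), μ i (f i j) ∂ P n := by
        rw [integral_sub hintΦ (integrable_const _), integral_const]
        simp [measure_univ]
      rw [e1]
      have hint2 : Integrable (fun x => |(∏ p ∈ Sg, S n p.1 p.2 x)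
          - ∏ i, ∏ j ∈ Finset.range (m i), μ i (f i j)|) (P n) := by
        refine integrable_of_abs_le (hΦmeas.sub measurable_const).abs
          (C ^ T + |∏ i, ∏ j ∈ Finset.range (m i), μ i (f i j)|) ?_
        intro x
        rw [abs_abs]
        have h5 := hΦb x
        calc |(∏ p ∈ Sg, S n p.1 p.2 x) - ∏ i, ∏ j ∈ Finset.range (m i), μ i (f i j)|
            ≤ |∏ p ∈ Sg, S n p.1 p.2 x| + |∏ i, ∏ j ∈ Finset.range (m i), μ i (f i j)| :=
              abs_sub _ _
          _ ≤ _ := by linarith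
      have hint3 : Integrable
          (fun x => (∑ p ∈ Sg, |S n p.1 p.2 x - μ p.1 (f p.1 p.2)|) * C ^ T) (P n) :=
        (integrable_finset_sum Sg hint1).mul_const _
      have habsint := norm_integral_le_integral_norm (μ := P n)
        (fun x => (∏ p ∈ Sg, S n p.1 p.2 x) - ∏ i, ∏ j ∈ Finset.range (m i), μ i (f i j))
      rw [Real.norm_eq_abs] at habsint
      refine le_trans habsint (le_trans (integral_mono hint2 hint3 ?_) le_rfl)
      intro x
      simpa [Real.norm_eq_abs] using hpt x
    have h3 : ∫ x, (∑ p ∈ Sg, |S n p.1 p.2 x - μ p.1 (f p.1 p.2)|) * C ^ T ∂ P n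
        = (∑ p ∈ Sg, ∫ x, |S n p.1 p.2 x - μ p.1 (f p.1 p.2)| ∂ P n) * C ^ T := by
      rw [integral_mul_const, integral_finset_sum Sg hint1]
    have h4 : ∀ p ∈ Sg, ∫ x, |S n p.1 p.2 x - μ p.1 (f p.1 p.2)| ∂ P n ≤ ε' + 2 * C * ε' := by
      intro p hp
      have hpj := (memSg p).mp hp
      set A := {x : Fin k → ℕ → ℝ | ε' ≤ |S n p.1 p.2 x - μ p.1 (f p.1 p.2)|} with hAdef
      have hAm : MeasurableSet A :=
        measurableSet_le measurable_const ((measS n p.1 p.2 hpj).sub measurable_const).abs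
      have hptA : ∀ x, |S n p.1 p.2 x - μ p.1 (f p.1 p.2)|
          ≤ ε' + (2 * C) * A.indicator (fun _ => (1 : ℝ)) x := by
        intro x
        by_cases hx : x ∈ A
        · rw [Set.indicator_of_mem hx]
          have h5 := hSC n p.1 p.2 hpj x
          have h6 := hμC p.1 p.2 hpj
          have h7 : |S n p.1 p.2 x - μ p.1 (f p.1 p.2)| ≤ 2 * C :=
            le_trans (abs_sub _ _) (by linarith)
          linarith [hε'0.le]
        · rw [Set.indicator_of_notMem hx]
          have hx' : ¬ ε' ≤ |S n p.1 p.2 x - μ p.1 (f p.1 p.2)| := hx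
          have := not_le.mp hx'
          linarith
      have hindint : Integrable (fun x => A.indicator (fun _ => (1 : ℝ)) x) (P n) :=
        (integrable_const (1 : ℝ)).indicator hAm
      have hind : Integrable (fun x => ε' + (2 * C) * A.indicator (fun _ => (1 : ℝ)) x) (P n) :=
        (integrable_const _).add (hindint.const_mul _)
      refine le_trans (integral_mono (hint1 p hp) hind hptA) ?_
      rw [integral_add (integrable_const _) (hindint.const_mul _), integral_const,
        integral_const_mul, integral_indicator_const _ hAm]
      simp only [measureReal_def, measure_univ, ENNReal.toReal_one, smul_eq_mul, one_smul, mul_one]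
      have h9 := hn p hp
      have h10 : ((P n) A).toReal ≤ ε' := h9
      nlinarith [hCpos]
    calc |G n k 0 - ∏ i, ∏ j ∈ Finset.range (m i), μ i (f i j)|
        ≤ (∑ p ∈ Sg, ∫ x, |S n p.1 p.2 x - μ p.1 (f p.1 p.2)| ∂ P n) * C ^ T := by
          rw [← h3]; exact h2
      _ ≤ (∑ _p ∈ Sg, (ε' + 2 * C * ε')) * C ^ T :=
          mul_le_mul_of_nonneg_right (Finset.sum_le_sum h4) (pow_nonneg hC0 T)
      _ = (Sg.card : ℝ) * (ε' + 2 * C * ε') * C ^ T := by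
          rw [Finset.sum_const, nsmul_eq_mul]
      _ = (T : ℝ) * ((ε' + 2 * C * ε') * C ^ T) := by rw [cardSg]; ring
  -- choose N
  obtain ⟨N₀, hN₀⟩ := exists_nat_gt ((k * T * (2 * T * K)) / (ε / 4))
  set N : ℕ := N₀ + 1 with hNdef
  have hN1 : 1 ≤ N := Nat.le_add_left 1 N₀
  have hNbound : ((k : ℝ) * T * (2 * T * K)) / (N : ℝ) < ε / 4 := by
    have h1 : (0 : ℝ) < (N : ℝ) := by positivity
    rw [div_lt_iff₀ h1]
    have h2 : ((k : ℝ) * T * (2 * T * K)) / (ε / 4) < (N : ℝ) := by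
      refine lt_of_lt_of_le hN₀ ?_
      exact_mod_cast Nat.le_succ N₀
    have h3 : (0 : ℝ) < ε / 4 := by linarith
    calc (k : ℝ) * T * (2 * T * K) = ((k : ℝ) * T * (2 * T * K)) / (ε / 4) * (ε / 4) := by
          field_simp
      _ < (N : ℝ) * (ε / 4) := mul_lt_mul_of_pos_right h2 h3
      _ = ε / 4 * (N : ℝ) := by ring
  -- eventual bounds
  have hev1 : ∀ᶠ n : Fin k → ℕ in atTop, ∀ p ∈ Sg,
      ((P n) {x | ε' ≤ |S n p.1 p.2 x - μ p.1 (f p.1 p.2)|}).toReal ≤ ε' := by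
    rw [eventually_all_finset]
    intro p hp
    have hpj := (memSg p).mp hp
    have h := hLLN p.1 (f p.1 p.2) (hf _ _ hpj) (hfb _ _ hpj) ε' hε'0
    have h2 : Tendsto (fun n : Fin k → ℕ =>
        ((P n) {x | ε' ≤ |S n p.1 p.2 x - μ p.1 (f p.1 p.2)|}).toReal) atTop (nhds 0) := by
      have h3 := (ENNReal.tendsto_toReal (by simp : (0 : ℝ≥0∞) ≠ ⊤)).comp h
      exact h3
    have h4 := h2.eventually_lt_const hε'0
    filter_upwards [h4] with n hn
    exact le_of_lt hn
  have hev2 : ∀ᶠ n : Fin k → ℕ in atTop, ∀ i, max N (m i) ≤ n i := by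
    filter_upwards [Filter.eventually_ge_atTop (fun i => max N (m i) : Fin k → ℕ)] with n hn i
    exact hn i
  filter_upwards [hev1, hev2] with n h1 h2
  rw [Real.dist_eq]
  have hmn : ∀ i, m i ≤ n i := fun i => le_trans (le_max_right _ _) (h2 i)
  have hNn : ∀ i, N ≤ n i := fun i => le_trans (le_max_left _ _) (h2 i)
  have hchain := chain N hN1 n hmn hNn
  have hB := hest n h1
  have hnum : (T : ℝ) * ((ε' + 2 * C * ε') * C ^ T) < ε / 2 := by
    have hCT : (0 : ℝ) < C ^ T := pow_pos hCpos T
    have h5 : (ε' + 2 * C * ε') * C ^ T ≤ 3 * K * ε' := by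
      have h6 : ε' + 2 * C * ε' ≤ 3 * C * ε' := by nlinarith [hε'0.le, hC1]
      calc (ε' + 2 * C * ε') * C ^ T ≤ (3 * C * ε') * C ^ T :=
            mul_le_mul_of_nonneg_right h6 hCT.le
        _ = 3 * (C ^ T * C) * ε' := by ring
        _ = 3 * K * ε' := by rw [hKdef, pow_succ]
    have h7 : (T : ℝ) * (3 * K * ε') < ε / 2 := by
      rw [hε'def]
      have he : (T : ℝ) * (3 * K * (ε / (8 * ((T : ℝ) + 1) * K)))
          = (3 * (T : ℝ) * ε) / (8 * ((T : ℝ) + 1)) := by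
        field_simp
      rw [he, div_lt_iff₀ (by positivity)]
      nlinarith [Nat.cast_nonneg (α := ℝ) T]
    calc (T : ℝ) * ((ε' + 2 * C * ε') * C ^ T) ≤ (T : ℝ) * (3 * K * ε') :=
          mul_le_mul_of_nonneg_left h5 (Nat.cast_nonneg T)
      _ < ε / 2 := h7
  calc |(∫ x, ∏ i, ∏ j ∈ Finset.range (m i), f i j (x i j) ∂ P n)
        - ∏ i, ∏ j ∈ Finset.range (m i), μ i (f i j)|
      = |G n 0 0 - ∏ i, ∏ j ∈ Finset.range (m i), μ i (f i j)| := by rw [hG00 n]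
    _ ≤ |G n 0 0 - G n k 0| + |G n k 0 - ∏ i, ∏ j ∈ Finset.range (m i), μ i (f i j)| :=
        abs_sub_le _ _ _
    _ = |G n k 0 - G n 0 0| + |G n k 0 - ∏ i, ∏ j ∈ Finset.range (m i), μ i (f i j)| := by
        rw [abs_sub_comm]
    _ ≤ ((k : ℝ) * T * (2 * T * K)) / (N : ℝ) + (T : ℝ) * ((ε' + 2 * C * ε') * C ^ T) :=
        add_le_add hchain hB
    _ < ε / 4 + ε / 2 := add_lt_add hNbound hnum
    _ < ε := by linarith
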